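/- arXiv:1705.08791 — 3 statements merged into one kernel-verified Lean document; each statement's English description precedes it below -/
import Mathlib

section
/- Let S(t) = Σ_{i≥0} s_i t^i be a complex formal power series and a a nonzero complex number. A formal power series Q(t) = Σ_{i≥0} q_i t^i with q_0 = 1/a solves the ODE (t·Q''(t) + Q'(t))·Q(t) − t·(Q'(t))² = S(t)·Q(t) if and only if q_i = f_S^i(a) for all i ≥ 1. -/
open PowerSeries

open Polynomial in
/-- The sequence of polynomials `f_S^i` associated to a coefficient sequence `s`. -/
noncomputable def fseq {R : Type*} [CommRing R] [Algebra ℚ R] (s : ℕ → R) : ℕ → Polynomial R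
  | 0 => 0
  | 1 => C (s 0)
  | (k+2) =>
      ((((k : ℚ)+2)^2)⁻¹) •
        (Polynomial.C (s (k+1)) + Polynomial.X *
          ∑ i ∈ (Finset.range (k+1)).attach,
            (Polynomial.C (s i.1) - ((((i.1 : ℤ))+1) * (2*(i.1 : ℤ)+1-((k : ℤ)+1))) • fseq s (i.1+1) ) *
              fseq s (k+1-i.1))
  termination_by k => k
  decreasing_by
  all_goals (first
    | omega
    | (have h := i.2; rw [Finset.mem_range] at h; omega))

/-- A formal power series `Q` solves the ODE
`(t·Q''(t) + Q'(t))·Q(t) − t·(Q'(t))² = S(t)·Q(t)` for the data `S`. -/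
def SolvesODE (S Q : PowerSeries ℂ) : Prop :=
  (X * (d⁄dX ℂ) ((d⁄dX ℂ) Q) + (d⁄dX ℂ) Q) * Q - X * ((d⁄dX ℂ) Q) ^ 2 = S * Q

private lemma fseq_eval (s : ℕ → ℂ) (a : ℂ) (m : ℕ) :
    (fseq s (m+2)).eval a = ((((m:ℂ)+1)+1)^2)⁻¹ *
      (s (m+1) + a * ∑ i ∈ Finset.range (m+1),
        (s i - ((i:ℂ)+1) * (2*(i:ℂ)+1-((m:ℂ)+1)) * (fseq s (i+1)).eval a) *
          (fseq s (m+1-i)).eval a) := by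
  rw [fseq]
  rw [Polynomial.eval_smul, Finset.sum_attach (Finset.range (m+1))
    (fun i => (Polynomial.C (s i) - ((((i : ℤ))+1) * (2*(i : ℤ)+1-((m : ℤ)+1))) • fseq s (i+1)) *
      fseq s (m+1-i))]
  rw [Rat.smul_def]
  push_cast
  simp only [Polynomial.eval_add, Polynomial.eval_mul, Polynomial.eval_C, Polynomial.eval_X,
    Polynomial.eval_finset_sum, Polynomial.eval_sub, zsmul_eq_mul, Polynomial.eval_intCast]
  push_cast
  ring

private lemma algcore (a c Qn sn S1 S2 S3 : ℂ) (ha : a ≠ 0) (hc : c ≠ 0) :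
    (S1 + c * Qn * (1/a) - S2 = S3 + sn * (1/a)) ↔
      Qn = c⁻¹ * (sn + a * (S3 - S1 + S2)) := by
  rw [eq_inv_mul_iff_mul_eq₀ hc]
  constructor
  · intro h
    field_simp at h
    linear_combination h
  · intro h
    field_simp
    linear_combination h

private lemma key (s q : ℕ → ℂ) (a : ℂ) (ha : a ≠ 0) (hq0 : q 0 = 1 / a) (n : ℕ)
    (hyp : ∀ j, 1 ≤ j → j ≤ n → q j = (fseq s j).eval a) :
    (∑ k ∈ Finset.range (n+1), ((k:ℂ)+1)^2 * q (k+1) * q (n-k)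
      - ∑ k ∈ Finset.range n, (((k:ℂ)+1)*((n:ℂ)-k)) * (q (k+1) * q (n-k))
      = ∑ k ∈ Finset.range (n+1), s k * q (n-k))
    ↔ q (n+1) = (fseq s (n+1)).eval a := by
  have hF1 : (fseq s 1).eval a = s 0 := by rw [fseq]; simp
  rw [Finset.sum_range_succ, Finset.sum_range_succ (fun k => s k * q (n-k)), Nat.sub_self, hq0]
  have hrw1 : ∀ k ∈ Finset.range n, ((k:ℂ)+1)^2 * q (k+1) * q (n-k)
      = ((k:ℂ)+1)^2 * (fseq s (k+1)).eval a * (fseq s (n-k)).eval a := fun k hk => by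
    rw [Finset.mem_range] at hk
    rw [hyp (k+1) (by omega) (by omega), hyp (n-k) (by omega) (by omega)]
  have hrw2 : ∀ k ∈ Finset.range n, (((k:ℂ)+1)*((n:ℂ)-k)) * (q (k+1) * q (n-k))
      = (((k:ℂ)+1)*((n:ℂ)-k)) * ((fseq s (k+1)).eval a * (fseq s (n-k)).eval a) := fun k hk => by
    rw [Finset.mem_range] at hk
    rw [hyp (k+1) (by omega) (by omega), hyp (n-k) (by omega) (by omega)]
  have hrw3 : ∀ k ∈ Finset.range n, s k * q (n-k) = s k * (fseq s (n-k)).eval a := fun k hk => by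
    rw [Finset.mem_range] at hk
    rw [hyp (n-k) (by omega) (by omega)]
  rw [Finset.sum_congr rfl hrw1, Finset.sum_congr rfl hrw2, Finset.sum_congr rfl hrw3]
  cases n with
  | zero =>
    simp only [Finset.range_zero, Finset.sum_empty, zero_add, sub_zero, Nat.cast_zero, hF1]
    rw [one_pow, one_mul]
    constructor
    · intro h
      exact mul_right_cancel₀ (one_div_ne_zero ha) h
    · intro h
      rw [h]
  | succ m =>
    have hc : (((m:ℂ)+1)+1)^2 ≠ 0 := by
      apply pow_ne_zero
      have h2 : ((m:ℂ)+1+1) = ((m+2 : ℕ) : ℂ) := by push_cast; ring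
      rw [h2]
      exact Nat.cast_ne_zero.mpr (by omega)
    have hFval : (fseq s (m+2)).eval a = ((((m:ℂ)+1)+1)^2)⁻¹ *
        (s (m+1) + a * ∑ i ∈ Finset.range (m+1),
          (s i - ((i:ℂ)+1) * (2*(i:ℂ)+1-((m:ℂ)+1)) * (fseq s (i+1)).eval a) *
            (fseq s (m+1-i)).eval a) := fseq_eval s a m
    have hsum : ∑ i ∈ Finset.range (m+1),
          (s i - ((i:ℂ)+1) * (2*(i:ℂ)+1-((m:ℂ)+1)) * (fseq s (i+1)).eval a) *
            (fseq s (m+1-i)).eval a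
        = (∑ k ∈ Finset.range (m+1), s k * (fseq s (m+1-k)).eval a)
          - (∑ k ∈ Finset.range (m+1), ((k:ℂ)+1)^2 * (fseq s (k+1)).eval a * (fseq s (m+1-k)).eval a)
          + (∑ k ∈ Finset.range (m+1), (((k:ℂ)+1)*(((m:ℂ)+1)-k)) *
              ((fseq s (k+1)).eval a * (fseq s (m+1-k)).eval a)) := by
      rw [← Finset.sum_sub_distrib, ← Finset.sum_add_distrib]
      refine Finset.sum_congr rfl fun k hk => ?_
      ring
    push_cast
    rw [show m+1+1 = m+2 from rfl, hFval, hsum]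
    exact algcore a _ _ _ _ _ _ ha hc

private lemma coeff_A (Q : PowerSeries ℂ) (n : ℕ) :
    coeff n (X * (d⁄dX ℂ) ((d⁄dX ℂ) Q) + (d⁄dX ℂ) Q) = ((n:ℂ)+1)^2 * coeff (n+1) Q := by
  cases n with
  | zero =>
    rw [map_add, coeff_zero_X_mul, coeff_derivative]
    push_cast; ring
  | succ m =>
    rw [map_add, coeff_succ_X_mul, coeff_derivative, coeff_derivative]
    push_cast; ring

private lemma coeff_ode (Q : PowerSeries ℂ) (n : ℕ) :
    (coeff n) ((X * (d⁄dX ℂ) ((d⁄dX ℂ) Q) + (d⁄dX ℂ) Q) * Q - X * ((d⁄dX ℂ) Q) ^ 2)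
      = ∑ k ∈ Finset.range (n+1), ((k:ℂ)+1)^2 * coeff (k+1) Q * coeff (n-k) Q
        - ∑ k ∈ Finset.range n, (((k:ℂ)+1)*(((n:ℂ))-k)) * (coeff (k+1) Q * coeff (n-k) Q) := by
  rw [map_sub, coeff_mul, Finset.Nat.sum_antidiagonal_eq_sum_range_succ_mk]
  congr 1
  · exact Finset.sum_congr rfl fun k _ => by rw [coeff_A]
  · cases n with
    | zero => simp [coeff_zero_X_mul]
    | succ m =>
      rw [coeff_succ_X_mul, sq, coeff_mul, Finset.Nat.sum_antidiagonal_eq_sum_range_succ_mk]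
      refine Finset.sum_congr rfl fun k hk => ?_
      rw [Finset.mem_range] at hk
      rw [coeff_derivative, coeff_derivative]
      have h1 : m + 1 - k = (m - k) + 1 := by omega
      rw [h1]
      have hk' : k ≤ m := by omega
      push_cast [Nat.cast_sub hk']; ring

/-- Let `S` be a complex formal power series and `a ≠ 0`.
A formal power series `Q` with `Q(0) = 1/a` solves the ODE for data `S` if and only if
its coefficients satisfy `q_i = f_S^i(a)` for all `i ≥ 1`. -/
theorem stmt4 (S : PowerSeries ℂ) (a : ℂ) (ha : a ≠ 0) (Q : PowerSeries ℂ)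
    (h0 : constantCoeff Q = 1 / a) :
    SolvesODE S Q ↔
      ∀ i : ℕ, 1 ≤ i →
        coeff i Q = (fseq (fun n => coeff n S) i).eval a := by
  have hq0 : (fun k => coeff k Q) 0 = 1 / a := by
    simpa [coeff_zero_eq_constantCoeff] using h0
  have key' : ∀ n : ℕ,
      (∀ j, 1 ≤ j → j ≤ n → coeff j Q = (fseq (fun k => coeff k S) j).eval a) →
      ((coeff n ((X * (d⁄dX ℂ) ((d⁄dX ℂ) Q) + (d⁄dX ℂ) Q) * Q - X * ((d⁄dX ℂ) Q) ^ 2)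
          = coeff n (S * Q)) ↔
        coeff (n+1) Q = (fseq (fun k => coeff k S) (n+1)).eval a) := by
    intro n hyp
    rw [coeff_ode, coeff_mul, Finset.Nat.sum_antidiagonal_eq_sum_range_succ_mk]
    exact key (fun k => coeff k S) (fun k => coeff k Q) a ha hq0 n hyp
  constructor
  · intro hode i hi
    induction i using Nat.strong_induction_on with
    | _ i ih =>
      obtain ⟨n, rfl⟩ : ∃ n, i = n + 1 := ⟨i - 1, by omega⟩
      exact (key' n (fun j hj1 hjn => ih j (by omega) hj1)).mp
        (by rw [SolvesODE] at hode; rw [hode])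
  · intro h
    rw [SolvesODE]
    ext n
    exact (key' n (fun j hj1 _ => h j hj1)).mpr (h (n+1) (by omega))
end

section
/- Let S(t) be a complex polynomial of degree m, let a be a nonzero complex number, and let Q(t) = Σ_{i≥0} q_i t^i be the formal power series solution of the ODE (t·Q'' + Q')·Q − t·(Q')² = S·Q with q_0 = 1/a and q_i = f_S^i(a) for i ≥ 1. Then Q(t) is a polynomial in t if and only if there exists a natural number N with N ≥ m+2 such that a = q_0^{−1} is a common root of the polynomials f_S^i for all N+1 ≤ i ≤ 2N−1. -/
open PowerSeries

private lemma stmt6_coeff_Tpart (Q : PowerSeries ℂ) (i : ℕ) :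
    coeff i (X * (d⁄dX ℂ) ((d⁄dX ℂ) Q) + (d⁄dX ℂ) Q) = ((i:ℂ)+1)^2 * coeff (i+1) Q := by
  cases i with
  | zero =>
      rw [map_add, coeff_zero_X_mul]
      simp only [coeff_derivative]
      push_cast; ring
  | succ j =>
      rw [map_add, coeff_succ_X_mul]
      simp only [coeff_derivative]
      push_cast; ring

private lemma stmt6_ode_rec (S Q : PowerSeries ℂ) (hode : SolvesODE S Q) (k : ℕ) :
    ∑ i ∈ Finset.range (k+2), (((i:ℂ)+1) * (2*(i:ℂ) - (k:ℂ))) * coeff (i+1) Q * coeff (k+1-i) Q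
      = ∑ i ∈ Finset.range (k+2), coeff i S * coeff (k+1-i) Q := by
  have h : coeff (k+1) ((X * (d⁄dX ℂ) ((d⁄dX ℂ) Q) + (d⁄dX ℂ) Q) * Q - X * ((d⁄dX ℂ) Q)^2)
      = coeff (k+1) (S*Q) := by rw [hode]
  rw [map_sub, coeff_mul, coeff_succ_X_mul, sq, coeff_mul, coeff_mul,
    Finset.Nat.sum_antidiagonal_eq_sum_range_succ_mk,
    Finset.Nat.sum_antidiagonal_eq_sum_range_succ_mk,
    Finset.Nat.sum_antidiagonal_eq_sum_range_succ_mk] at h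
  have e1 : ∑ i ∈ Finset.range (k+2),
      coeff i (X * (d⁄dX ℂ) ((d⁄dX ℂ) Q) + (d⁄dX ℂ) Q) * coeff (k+1-i) Q
      = ∑ i ∈ Finset.range (k+2), ((i:ℂ)+1)^2 * coeff (i+1) Q * coeff (k+1-i) Q := by
    refine Finset.sum_congr rfl fun i _ => ?_
    rw [stmt6_coeff_Tpart, mul_assoc]
  have e2 : ∑ i ∈ Finset.range (k+2),
          (((i:ℂ)+1) * ((k:ℂ)+1-(i:ℂ))) * coeff (i+1) Q * coeff (k+1-i) Q
      = ∑ i ∈ Finset.range (k+1), coeff i ((d⁄dX ℂ) Q) * coeff (k-i) ((d⁄dX ℂ) Q) := by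
    rw [Finset.sum_range_succ]
    have htop : (((k+1:ℕ):ℂ)+1) * ((k:ℂ)+1-((k+1:ℕ):ℂ)) * coeff (k+1+1) Q
        * coeff (k+1-(k+1)) Q = 0 := by push_cast; ring
    rw [htop, add_zero]
    refine Finset.sum_congr rfl fun i hi => ?_
    rw [Finset.mem_range] at hi
    have hik : i ≤ k := by omega
    rw [coeff_derivative, coeff_derivative]
    have h1 : k - i + 1 = k + 1 - i := by omega
    have h2 : ((k-i:ℕ):ℂ) = (k:ℂ) - (i:ℂ) := by
      push_cast [Nat.cast_sub hik]; ring
    rw [h1, h2]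
    push_cast; ring
  rw [e1, ← e2, ← Finset.sum_sub_distrib] at h
  rw [← h]
  refine Finset.sum_congr rfl fun i _ => ?_
  ring

/-- Let `S` be a complex polynomial of degree `m`, `a ≠ 0`, and let `Q`
be the power series solution of the ODE with `q_0 = 1/a` and `q_i = f_S^i(a)` for `i ≥ 1`.
Then `Q` is a polynomial (all but finitely many coefficients vanish) if and only if there
is `N ≥ m+2` such that `a = q_0⁻¹` is a common root of `f_S^i` for all `N+1 ≤ i ≤ 2N−1`. -/
theorem stmt6 (S : Polynomial ℂ) (m : ℕ) (hS : S.degree = m)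
    (a : ℂ) (ha : a ≠ 0) (Q : PowerSeries ℂ)
    (hode : SolvesODE (S : PowerSeries ℂ) Q)
    (h0 : constantCoeff Q = 1 / a)
    (hcoeff : ∀ i : ℕ, 1 ≤ i → coeff i Q = (fseq (fun n => S.coeff n) i).eval a) :
    (∃ n : ℕ, ∀ i : ℕ, n < i → coeff i Q = 0) ↔
      (∃ N : ℕ, m + 2 ≤ N ∧
        ∀ i : ℕ, N + 1 ≤ i → i ≤ 2 * N - 1 → (fseq (fun n => S.coeff n) i).eval a = 0) := by
  have hq0 : coeff 0 Q = 1/a := by rw [coeff_zero_eq_constantCoeff_apply, h0]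
  have hq0ne : coeff 0 Q ≠ 0 := by rw [hq0]; exact one_div_ne_zero ha
  have hm : S.natDegree = m := Polynomial.natDegree_eq_of_degree_eq_some hS
  constructor
  · rintro ⟨n, hn⟩
    refine ⟨max n (m+2), le_max_right _ _, fun i hi1 _ => ?_⟩
    rw [← hcoeff i (by omega)]
    exact hn i (by omega)
  · rintro ⟨N, hN, hvan⟩
    have hvan' : ∀ i, N+1 ≤ i → i ≤ 2*N-1 → coeff i Q = 0 := fun i h1 h2 => by
      rw [hcoeff i (by omega)]; exact hvan i h1 h2
    have hSc : ∀ i, m < i → (coeff i (S : PowerSeries ℂ)) = 0 := fun i hi => by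
      rw [Polynomial.coeff_coe]
      exact Polynomial.coeff_eq_zero_of_natDegree_lt (by omega)
    refine ⟨N, fun i hi => ?_⟩
    induction i using Nat.strong_induction_on with
    | _ K IH =>
      by_cases hc : K ≤ 2*N-1
      · exact hvan' K hi hc
      · have h2N : 2*N ≤ K := by omega
        obtain ⟨k, rfl⟩ : ∃ k, K = k+2 := ⟨K-2, by omega⟩
        have hrec := stmt6_ode_rec (S : PowerSeries ℂ) Q hode k
        have hR : ∑ i ∈ Finset.range (k+2),
            coeff i (S:PowerSeries ℂ) * coeff (k+1-i) Q = 0 := by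
          refine Finset.sum_eq_zero fun i hi2 => ?_
          rw [Finset.mem_range] at hi2
          by_cases him : m < i
          · rw [hSc i him, zero_mul]
          · rw [IH (k+1-i) (by omega) (by omega), mul_zero]
        rw [Finset.sum_range_succ] at hrec
        have hz : ∑ i ∈ Finset.range (k+1),
            (((i:ℂ)+1)*(2*(i:ℂ)-(k:ℂ))) * coeff (i+1) Q * coeff (k+1-i) Q = 0 := by
          refine Finset.sum_eq_zero fun i hi2 => ?_
          rw [Finset.mem_range] at hi2
          by_cases h1 : N < i+1
          · rw [IH (i+1) (by omega) h1]; ring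
          · by_cases h2 : N < k+1-i
            · rw [IH (k+1-i) (by omega) h2]; ring
            · have h2i : 2*i = k := by omega
              have hzc : (2*(i:ℂ) - (k:ℂ)) = 0 := by
                rw [← h2i]; push_cast; ring
              rw [hzc]; ring
        rw [hz, hR, zero_add, Nat.sub_self] at hrec
        have hcast : (((k+1:ℕ):ℂ)+1) * (2*((k+1:ℕ):ℂ) - (k:ℂ)) = ((k+2:ℕ):ℂ) * ((k+2:ℕ):ℂ) := by
          push_cast; ring
        have h22 : ((k+2:ℕ):ℂ) ≠ 0 := Nat.cast_ne_zero.mpr (by omega)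
        rcases mul_eq_zero.mp hrec with h' | h'
        · rcases mul_eq_zero.mp h' with h'' | h''
          · rw [hcast] at h''
            exact absurd h'' (mul_ne_zero h22 h22)
          · exact h''
        · exact absurd h' hq0ne
end

section
/- Let q, S ∈ ℂ[t] and define the bivariate polynomials v(x,y) = q(xy) and σ(x,y) = S(xy). Then v·v_{xy} − v_x·v_y − σ·v = R(xy), where R(t) = t·q''(t)·q(t) + q'(t)·q(t) − t·(q'(t))² − S(t)·q(t). In particular, v solves the PDE v·v_{xy} − v_x·v_y = σ·v if and only if q solves the ODE (t·q'' + q')·q − t·(q')² = S·q. -/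
open MvPolynomial

/-- A bivariate polynomial `u ∈ ℂ[x,y]` solves the PDE
`u·u_{xy} − u_x·u_y = σ·u` for the data `σ`, where `x` is the variable `0` and `y` is
the variable `1`. -/
def SolvesPDE (σ u : MvPolynomial (Fin 2) ℂ) : Prop :=
  u * pderiv 0 (pderiv 1 u) - pderiv 0 u * pderiv 1 u = σ * u

/-- A polynomial `Q` solves the ODE
`(t·Q''(t) + Q'(t))·Q(t) − t·(Q'(t))² = S(t)·Q(t)` for the data `S`. -/
def SolvesODEPoly (S Q : Polynomial ℂ) : Prop :=
  (Polynomial.X * Polynomial.derivative (Polynomial.derivative Q) + Polynomial.derivative Q) * Q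
    - Polynomial.X * (Polynomial.derivative Q) ^ 2 = S * Q

/-- Substitution of the product `xy` for the variable `t` of a one-variable polynomial. -/
noncomputable def subXY (q : Polynomial ℂ) : MvPolynomial (Fin 2) ℂ :=
  Polynomial.aeval (X 0 * X 1 : MvPolynomial (Fin 2) ℂ) q

lemma pderiv_subXY (i : Fin 2) (q : Polynomial ℂ) :
    pderiv i (subXY q) = subXY (Polynomial.derivative q) * pderiv i (X 0 * X 1) := by
  induction q using Polynomial.induction_on' with
  | add p r hp hr =>
      simp [subXY, map_add, hp, hr]; ring
  | monomial n a =>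
      simp only [subXY, Polynomial.aeval_monomial, Polynomial.derivative_monomial]
      cases n with
      | zero => simp
      | succ m =>
        simp only [Derivation.leibniz, pderiv_pow, map_mul, Polynomial.aeval_C,
          map_natCast, Polynomial.aeval_X, smul_eq_mul]
        push_cast
        ring_nf
        simp [algebraMap_eq]

lemma subXY_injective : Function.Injective subXY := by
  have h : Function.LeftInverse
      (fun p : MvPolynomial (Fin 2) ℂ => aeval ![Polynomial.X, 1] p) subXY := by
    intro q
    simp [subXY, ← Polynomial.aeval_algHom_apply]
  exact h.injective

/-- Let `q, S ∈ ℂ[t]`, `v(x,y) = q(xy)` and `σ(x,y) = S(xy)`. Then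
`v·v_{xy} − v_x·v_y − σ·v = R(xy)` where
`R(t) = t·q''·q + q'·q − t·(q')² − S·q`; in particular `v` solves the PDE for the data
`σ` if and only if `q` solves the ODE for the data `S`. -/
theorem stmt18 (q S : Polynomial ℂ) :
    (subXY q * pderiv 0 (pderiv 1 (subXY q)) - pderiv 0 (subXY q) * pderiv 1 (subXY q)
        - subXY S * subXY q =
      subXY (Polynomial.X * Polynomial.derivative (Polynomial.derivative q) * q
        + Polynomial.derivative q * q - Polynomial.X * (Polynomial.derivative q) ^ 2 - S * q)) ∧
    (SolvesPDE (subXY S) (subXY q) ↔ SolvesODEPoly S q) := by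
  have key : subXY q * pderiv 0 (pderiv 1 (subXY q)) - pderiv 0 (subXY q) * pderiv 1 (subXY q)
        - subXY S * subXY q =
      subXY (Polynomial.X * Polynomial.derivative (Polynomial.derivative q) * q
        + Polynomial.derivative q * q - Polynomial.X * (Polynomial.derivative q) ^ 2 - S * q) := by
    have h1 : pderiv 1 (subXY q) = subXY (Polynomial.derivative q) * X 0 := by
      rw [pderiv_subXY]; simp
    have h0 : ∀ r : Polynomial ℂ, pderiv 0 (subXY r) = subXY (Polynomial.derivative r) * X 1 := by
      intro r; rw [pderiv_subXY]; simp
    have h2 : pderiv 0 (pderiv 1 (subXY q)) =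
        subXY (Polynomial.derivative q) +
          X 0 * (subXY (Polynomial.derivative (Polynomial.derivative q)) * X 1) := by
      rw [h1, Derivation.leibniz, h0, pderiv_X_self, smul_eq_mul, smul_eq_mul]
      ring
    have hX : subXY Polynomial.X = X 0 * X 1 := by simp [subXY]
    have hmul : ∀ a b : Polynomial ℂ, subXY (a * b) = subXY a * subXY b := by
      intro a b; simp [subXY]
    have hadd : ∀ a b : Polynomial ℂ, subXY (a + b) = subXY a + subXY b := by
      intro a b; simp [subXY]
    have hsub : ∀ a b : Polynomial ℂ, subXY (a - b) = subXY a - subXY b := by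
      intro a b; simp [subXY]
    have hpow : subXY ((Polynomial.derivative q) ^ 2) = subXY (Polynomial.derivative q) ^ 2 := by
      simp [subXY]
    rw [h2, h0, h1, hsub, hsub, hadd, hmul, hmul, hmul, hmul, hmul, hpow, hX]
    ring
  refine ⟨key, ?_⟩
  unfold SolvesPDE SolvesODEPoly
  rw [← sub_eq_zero, ← sub_eq_zero (b := S * q)]
  have hz : subXY 0 = 0 := by simp [subXY]
  constructor
  · intro h
    apply subXY_injective
    rw [hz, show ((Polynomial.X * Polynomial.derivative (Polynomial.derivative q)
        + Polynomial.derivative q) * q - Polynomial.X * (Polynomial.derivative q) ^ 2 - S * q)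
      = (Polynomial.X * Polynomial.derivative (Polynomial.derivative q) * q
        + Polynomial.derivative q * q - Polynomial.X * (Polynomial.derivative q) ^ 2 - S * q)
      from by ring, ← key]
    linear_combination h
  · intro h
    have : subXY (Polynomial.X * Polynomial.derivative (Polynomial.derivative q) * q
        + Polynomial.derivative q * q - Polynomial.X * (Polynomial.derivative q) ^ 2 - S * q)
        = 0 := by
      have : (Polynomial.X * Polynomial.derivative (Polynomial.derivative q) * q
        + Polynomial.derivative q * q - Polynomial.X * (Polynomial.derivative q) ^ 2 - S * q)
        = 0 := by linear_combination h
      rw [this, hz]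
    rw [← key] at this
    linear_combination this
end
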